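/- Let x₁,…,x₄ and y₁,…,y₄ be points of ℙ¹ represented by nonzero vectors in ℂ². Then the 4×4 matrix Z₄ with rows xᵢᵀ ⊗ yᵢᵀ satisfies det(Z₄) = [14]_x[23]_x[13]_y[24]_y − [13]_x[24]_x[14]_y[23]_y, where [ij]_x = det(xᵢ, xⱼ) is the 2×2 determinant of the matrix with rows xᵢᵀ, xⱼᵀ, and similarly for [ij]_y. -/
import Mathlib

open Matrix

/-- The 2×2 bracket `[ij]` of two vectors `u, v ∈ ℂ²`: `u₁v₂ − u₂v₁`. -/
def br2 (u v : Fin 2 → ℂ) : ℂ := u 0 * v 1 - u 1 * v 0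

/-- For `x₁,…,x₄, y₁,…,y₄ ∈ ℂ²`, the 4×4 matrix `Z₄` with rows `xᵢᵀ ⊗ yᵢᵀ` satisfies
`det Z₄ = [14]_x[23]_x[13]_y[24]_y − [13]_x[24]_x[14]_y[23]_y`. -/
theorem stmt3 (x y : Fin 4 → Fin 2 → ℂ) :
    (Matrix.of fun i : Fin 4 =>
        ![x i 0 * y i 0, x i 0 * y i 1, x i 1 * y i 0, x i 1 * y i 1]).det =
      br2 (x 0) (x 3) * br2 (x 1) (x 2) * br2 (y 0) (y 2) * br2 (y 1) (y 3) -
        br2 (x 0) (x 2) * br2 (x 1) (x 3) * br2 (y 0) (y 3) * br2 (y 1) (y 2) := by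
  simp [Matrix.det_succ_row_zero, Fin.sum_univ_succ, br2, show (Fin.succ 2 : Fin 4) = 3 from rfl, show ((1:Fin 4).succAbove 2) = 3 from rfl, show ((2:Fin 4).succAbove 2) = 3 from rfl, show ((3:Fin 4).succAbove 2) = 2 from rfl, show (Fin.castSucc 2 : Fin 4) = 2 from rfl]
  ring
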